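/- Let X be a compact metric space, f : X → X continuous, and φ : X → ℝ continuous and eventually positive, i.e. there exists N ∈ ℕ such that Sₙφ(x) > 0 for all x ∈ X and all n ≥ N. Then the set of continuous ψ : X → ℝ that are eventually positive is open in C(X) with the uniform norm; more precisely, if ‖ψ − φ‖_∞ < (1/N) min_{x∈X} S_Nφ(x) · (1/2) then ψ is eventually positive. (It suffices to show: if S_Nφ(x) ≥ c > 0 for all x and ‖ψ−φ‖_∞ < c/(2N), then ψ is eventually positive.) -/

import Mathlib

/-- Eventual positivity is stable under uniform perturbation: if `S_N φ ≥ c > 0`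
everywhere and `‖ψ − φ‖_∞ < c / (2N)`, then `ψ` is eventually positive. -/
theorem stmt2 {X : Type*} [MetricSpace X] [CompactSpace X] [Nonempty X]
    (f : X → X) (hf : Continuous f) (φ ψ : X → ℝ) (hφ : Continuous φ)
    (hψ : Continuous ψ) (N : ℕ) (hN : 0 < N) (c : ℝ) (hc : 0 < c)
    (hSN : ∀ x : X, c ≤ ∑ j ∈ Finset.range N, φ (f^[j] x))
    (hclose : ∀ x : X, |ψ x - φ x| < c / (2 * N)) :
    ∃ M : ℕ, ∀ x : X, ∀ n : ℕ, M ≤ n → 0 < ∑ j ∈ Finset.range n, ψ (f^[j] x) := by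
  have hNR : (0:ℝ) < N := by exact_mod_cast hN
  -- Step 1: S_N ψ ≥ c/2 everywhere
  have hSNψ : ∀ x : X, c / 2 ≤ ∑ j ∈ Finset.range N, ψ (f^[j] x) := by
    intro x
    have h1 : ∑ j ∈ Finset.range N, (φ (f^[j] x) - ψ (f^[j] x)) ≤ N * (c / (2 * N)) := by
      calc ∑ j ∈ Finset.range N, (φ (f^[j] x) - ψ (f^[j] x))
          ≤ ∑ _j ∈ Finset.range N, c / (2 * N) := by
            refine Finset.sum_le_sum fun j _ => ?_
            have h := abs_lt.mp (hclose (f^[j] x))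
            linarith [h.1, h.2]
        _ = N * (c / (2 * N)) := by rw [Finset.sum_const]; simp [mul_comm]
    have h2 : (N:ℝ) * (c / (2 * N)) = c / 2 := by field_simp
    have h3 := hSN x
    have h4 : ∑ j ∈ Finset.range N, (φ (f^[j] x) - ψ (f^[j] x))
        = (∑ j ∈ Finset.range N, φ (f^[j] x)) - ∑ j ∈ Finset.range N, ψ (f^[j] x) :=
      Finset.sum_sub_distrib _ _
    rw [h4, h2] at h1
    linarith
  -- Step 2: block bound
  have hblock : ∀ (k : ℕ) (x : X),
      (k : ℝ) * (c / 2) ≤ ∑ j ∈ Finset.range (k * N), ψ (f^[j] x) := by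
    intro k
    induction k with
    | zero => simp
    | succ k ih =>
      intro x
      have he : (k + 1) * N = k * N + N := by ring
      rw [he, Finset.sum_range_add]
      have h1 : ∑ j ∈ Finset.range N, ψ (f^[k * N + j] x)
          = ∑ j ∈ Finset.range N, ψ (f^[j] (f^[k * N] x)) := by
        refine Finset.sum_congr rfl fun j _ => ?_
        rw [add_comm, Function.iterate_add_apply]
      rw [h1]
      have := hSNψ (f^[k * N] x)
      have := ih x
      push_cast
      linarith
  -- bound on ψ
  obtain ⟨B, hB⟩ : ∃ B, ∀ x : X, |ψ x| ≤ B := by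
    obtain ⟨B, hB⟩ := isCompact_univ.exists_bound_of_continuousOn hψ.continuousOn
    exact ⟨B, fun x => hB x (Set.mem_univ x)⟩
  have hB0 : 0 ≤ B := le_trans (abs_nonneg _) (hB Classical.ofNonempty)
  set K := ⌈(2 * N * B) / c⌉₊ with hK
  have hKc : N * B ≤ (K : ℝ) * (c / 2) := by
    have h := Nat.le_ceil ((2 * N * B) / c)
    rw [div_le_iff₀ hc] at h
    nlinarith
  refine ⟨(K + 1) * N, fun x n hn => ?_⟩
  set k := n / N with hk
  set r := n % N with hr
  have hnk : n = k * N + r := by rw [hk, hr, mul_comm]; exact (Nat.div_add_mod n N).symm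
  have hrN : r < N := Nat.mod_lt n hN
  have hkK : K + 1 ≤ k := (Nat.le_div_iff_mul_le hN).mpr hn
  rw [hnk, Finset.sum_range_add]
  have h1 : ((K:ℝ) + 1) * (c / 2) ≤ ∑ j ∈ Finset.range (k * N), ψ (f^[j] x) := by
    refine le_trans ?_ (hblock k x)
    have : ((K:ℝ) + 1) ≤ (k:ℝ) := by exact_mod_cast hkK
    nlinarith
  have h2 : -(N * B) ≤ ∑ j ∈ Finset.range r, ψ (f^[k * N + j] x) := by
    have : ∀ j ∈ Finset.range r, -B ≤ ψ (f^[k * N + j] x) := fun j _ =>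
      neg_le_of_abs_le (hB _)
    calc -((N:ℝ) * B) ≤ -((r:ℝ) * B) := by
          have : (r:ℝ) ≤ N := by exact_mod_cast hrN.le
          nlinarith
      _ = ∑ _j ∈ Finset.range r, (-B) := by rw [Finset.sum_const]; simp [mul_comm]
      _ ≤ _ := Finset.sum_le_sum this
  nlinarith
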